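/- Let N, d ∈ ℕ, μ ∈ ℝ^N, σ an N×d real matrix, β ∈ ℝ with β > 0, vectors u, v ∈ ℝ^d, w ∈ ℝ^N, λ ∈ ℝ^N, a symmetric negative semidefinite matrix G ∈ ℝ^{d×d} and a symmetric positive definite matrix M ∈ ℝ^{N×N}. Suppose the first-order Lagrangian system holds: (i) βμ − w + βσu = 0; (ii) μ − w + σv − Mλ = 0; (iii) u − v + βGσᵀλ = 0; (iv) λ·(μ + σu) = 0. Then λ = 0. -/

import Mathlib

/-- In the Markovian Principal–Agent problem, any Lagrange multiplier `λ` of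
the incentive-compatibility constraint must vanish when `β > 0`.  Here `u = ∇gᵃ(γ)`,
`v = ∇gᵖ(σᵀA − γ)` are gradients of the Agent's and Principal's concave generators,
`w = ∇c(A)` is the gradient of the strictly convex cost, `G = ∇²gᵃ(γ)` is symmetric negative
semidefinite and `M = ∇²c(A)` is symmetric positive definite.  The first-order Lagrangian
system (i) `βμ − w + βσu = 0`, (ii) `μ − w + σv − Mλ = 0`, (iii) `u − v + βGσᵀλ = 0`,
(iv) `λ·(μ + σu) = 0` forces `λ = 0`. -/
theorem lagrange_multiplier_vanishes {N d : ℕ}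
    (μv w : Fin N → ℝ) (σ : Matrix (Fin N) (Fin d) ℝ) (β : ℝ) (hβ : 0 < β)
    (u v : Fin d → ℝ) (lam : Fin N → ℝ)
    (G : Matrix (Fin d) (Fin d) ℝ) (M : Matrix (Fin N) (Fin N) ℝ)
    (hG : (-G).PosSemidef) (hM : M.PosDef)
    (h1 : β • μv - w + β • σ.mulVec u = 0)
    (h2 : μv - w + σ.mulVec v - M.mulVec lam = 0)
    (h3 : u - v + β • G.mulVec (σ.transpose.mulVec lam) = 0)
    (h4 : dotProduct lam (μv + σ.mulVec u) = 0) :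
    lam = 0 := by
  by_contra hlam
  set t := σ.transpose.mulVec lam with ht
  -- rewrite dot products through σ via t
  have hσ : ∀ x : Fin d → ℝ, dotProduct lam (σ.mulVec x) = dotProduct t x := by
    intro x
    rw [Matrix.dotProduct_mulVec, ht, Matrix.mulVec_transpose]
  -- (i): w = β•μv + β•σu
  have hw : w = β • μv + β • σ.mulVec u := by
    have h : (β • μv + β • σ.mulVec u) - w = 0 := by rw [← h1]; abel
    exact (sub_eq_zero.mp h).symm
  -- (ii): Mλ = μ − w + σv
  have hMl : M.mulVec lam = μv - w + σ.mulVec v := (sub_eq_zero.mp h2).symm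
  -- (iii): v − u = β•G t
  have hvu : v - u = β • G.mulVec t := by
    have h : β • G.mulVec t - (v - u) = 0 := by rw [← h3]; abel
    exact (sub_eq_zero.mp h).symm
  -- scalar identities
  have e1 : dotProduct lam (M.mulVec lam)
      = dotProduct lam μv - dotProduct lam w + dotProduct t v := by
    rw [hMl, dotProduct_add, dotProduct_sub, hσ]
  have e2 : dotProduct lam w
      = β * dotProduct lam μv + β * dotProduct t u := by
    rw [hw, dotProduct_add, dotProduct_smul, dotProduct_smul, hσ]
    simp [smul_eq_mul]
  have e3 : dotProduct t v - dotProduct t u = β * dotProduct t (G.mulVec t) := by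
    rw [← dotProduct_sub, hvu, dotProduct_smul, smul_eq_mul]
  have e4 : dotProduct lam μv + dotProduct t u = 0 := by
    rw [← hσ, ← dotProduct_add]; exact h4
  have e5 : β * dotProduct lam μv + β * dotProduct t u = 0 := by
    rw [← mul_add, e4, mul_zero]
  -- sign facts
  have hGs : dotProduct t (G.mulVec t) ≤ 0 := by
    have := hG.dotProduct_mulVec_nonneg t
    simp only [star_trivial, Matrix.neg_mulVec, dotProduct_neg] at this
    linarith
  have hprod : β * dotProduct t (G.mulVec t) ≤ 0 :=
    mul_nonpos_of_nonneg_of_nonpos hβ.le hGs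
  have hpos : 0 < dotProduct lam (M.mulVec lam) := by
    have := hM.dotProduct_mulVec_pos hlam
    simpa using this
  linarith
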